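/- arXiv:2007.01604 — 3 statements merged into one kernel-verified Lean document; each statement's English description precedes it below -/
import Mathlib

section
/- Let P be a polynomial with complex coefficients and let Ω ⊆ ℂ be a nonempty, bounded, open set such that Re(P(z)) = 0 for every z in the topological frontier of Ω. Then P is constant, i.e. P.natDegree = 0. -/
open Complex Polynomial Set Metric

theorem natDegree_eq_zero_of_re_eval_eq_zero_on_frontier (P : Polynomial ℂ) (Ω : Set ℂ)
    (hne : Ω.Nonempty) (hbd : Bornology.IsBounded Ω) (hop : IsOpen Ω)
    (hfr : ∀ z ∈ frontier Ω, (Polynomial.eval z P).re = 0) :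
    P.natDegree = 0 := by
  -- Step 1: Re (P z) = 0 for all z ∈ closure Ω
  have hdiff : Differentiable ℂ fun z : ℂ => Polynomial.eval z P := P.differentiable
  have hre : ∀ z ∈ closure Ω, (Polynomial.eval z P).re = 0 := by
    intro z hz
    have h1 : ‖Complex.exp (Polynomial.eval z P)‖ ≤ 1 := by
      refine Complex.norm_le_of_forall_mem_frontier_norm_le hbd
        ((Complex.differentiable_exp.comp hdiff).diffContOnCl) (fun w hw => ?_) hz
      simp only [Function.comp_apply]
      rw [Complex.norm_exp, hfr w hw, Real.exp_zero]
    have h2 : ‖Complex.exp (-Polynomial.eval z P)‖ ≤ 1 := by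
      refine Complex.norm_le_of_forall_mem_frontier_norm_le hbd
        ((Complex.differentiable_exp.comp hdiff.neg).diffContOnCl) (fun w hw => ?_) hz
      simp only [Function.comp_apply]
      rw [Complex.norm_exp, Pi.neg_apply, neg_re, hfr w hw, neg_zero, Real.exp_zero]
    rw [Complex.norm_exp, Real.exp_le_one_iff] at h1
    rw [Complex.norm_exp, neg_re, Real.exp_le_one_iff, neg_nonpos] at h2
    linarith
  obtain ⟨z₀, hz₀⟩ := hne
  -- Step 2: open mapping theorem at z₀
  have ha : AnalyticAt ℂ (fun z : ℂ => Polynomial.eval z P) z₀ :=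
    (hdiff.analyticAt z₀)
  rcases ha.eventually_constant_or_nhds_le_map_nhds with hconst | hopen
  · -- P is eventually constant, hence constant
    have hP : P - Polynomial.C (Polynomial.eval z₀ P) = 0 := by
      apply Polynomial.eq_zero_of_infinite_isRoot
      refine Set.Infinite.mono ?_ (infinite_of_mem_nhds z₀ (hconst : _ ∈ nhds z₀))
      intro x hx
      simp only [Set.mem_setOf_eq] at hx ⊢
      simp [Polynomial.IsRoot, hx]
    have : P = Polynomial.C (Polynomial.eval z₀ P) := by
      rwa [sub_eq_zero] at hP
    rw [this, Polynomial.natDegree_C]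
  · -- the image is a neighborhood of P z₀, contradicting Re = 0 on Ω
    exfalso
    have hmem : {w : ℂ | w.re = 0} ∈ nhds (Polynomial.eval z₀ P) := by
      apply hopen
      rw [Filter.mem_map]
      exact Filter.mem_of_superset (hop.mem_nhds hz₀) (fun w hw => hre w (subset_closure hw))
    obtain ⟨ε, hε, hball⟩ := Metric.mem_nhds_iff.mp hmem
    have h0 : (Polynomial.eval z₀ P).re = 0 := hre z₀ (subset_closure hz₀)
    have : ((Polynomial.eval z₀ P) + (ε / 2 : ℝ)) ∈ Metric.ball (Polynomial.eval z₀ P) ε := by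
      simp [Complex.dist_eq, Complex.norm_real, abs_of_pos, hε, half_lt_self hε,
        abs_of_pos (half_pos hε)]
    have := hball this
    simp only [Set.mem_setOf_eq, Complex.add_re, Complex.ofReal_re, h0, zero_add] at this
    linarith
end

section
/- Let P be a nonconstant polynomial with complex coefficients (0 < P.natDegree). Then for every z ∈ ℂ with Re(P(z)) < 0, the connected component of z inside the open set {w : ℂ | Re(P(w)) < 0} is unbounded (it does not satisfy Bornology.IsBounded). -/
open Set Bornology

theorem connectedComponentIn_re_lt_zero_unbounded (P : Polynomial ℂ)
    (hP : 0 < P.natDegree) (z : ℂ) (hz : (Polynomial.eval z P).re < 0) :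
    ¬ Bornology.IsBounded
      (connectedComponentIn {w : ℂ | (Polynomial.eval w P).re < 0} z) := by
  intro hb
  set U : Set ℂ := {w : ℂ | (Polynomial.eval w P).re < 0} with hU
  have hcont : Continuous fun w : ℂ => (Polynomial.eval w P).re :=
    Complex.continuous_re.comp (P.continuous_aeval)
  have hUopen : IsOpen U := isOpen_lt hcont continuous_const
  have hzU : z ∈ U := hz
  set K := connectedComponentIn U z with hK
  have hKopen : IsOpen K := hUopen.connectedComponentIn
  have hzK : z ∈ K := mem_connectedComponentIn hzU
  -- closure of K has Re ≤ 0
  have hclU : closure U ⊆ {w : ℂ | (Polynomial.eval w P).re ≤ 0} :=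
    closure_minimal (fun w hw => le_of_lt (show (Polynomial.eval w P).re < 0 from hw)) (isClosed_le hcont continuous_const)
  -- frontier points of K are not in U
  have hfrontier : ∀ w ∈ frontier K, w ∉ U := by
    intro w hw hwU
    have hwK : w ∉ K := by
      rw [hKopen.frontier_eq] at hw; exact hw.2
    -- take a connected neighborhood of w inside U
    obtain ⟨N, hNU, hNopen, hwN, hNconn⟩ :=
      locallyConnectedSpace_iff_subsets_isOpen_isConnected.mp inferInstance w U
        (hUopen.mem_nhds hwU)
    -- N meets K since w ∈ closure K
    have hwcl : w ∈ closure K := hw.1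
    obtain ⟨p, hpN, hpK⟩ := mem_closure_iff.mp hwcl N hNopen hwN
    have : N ⊆ connectedComponentIn U p :=
      hNconn.isPreconnected.subset_connectedComponentIn hpN hNU
    rw [← connectedComponentIn_eq hpK] at this
    exact hwK (this hwN)
  -- maximum modulus applied to exp (-P)
  set f : ℂ → ℂ := fun w => Complex.exp (-(Polynomial.eval w P)) with hf
  have hdiff : Differentiable ℂ f := by
    apply Complex.differentiable_exp.comp
    exact (P.differentiable).neg
  obtain ⟨w, hwfr, hmax⟩ :=
    Complex.exists_mem_frontier_isMaxOn_norm hb ⟨z, hzK⟩ hdiff.diffContOnCl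
  have hwle : (Polynomial.eval w P).re ≤ 0 :=
    hclU (closure_mono (connectedComponentIn_subset U z) hwfr.1)
  have hwge : ¬ (Polynomial.eval w P).re < 0 := hfrontier w hwfr
  have hw0 : (Polynomial.eval w P).re = 0 := le_antisymm hwle (not_lt.mp hwge)
  have hzcl : z ∈ closure K := subset_closure hzK
  have := hmax hzcl
  simp only [Function.comp, hf, Complex.norm_exp, Complex.neg_re,
    hw0, neg_zero, Real.exp_zero] at this
  have h2 : Real.exp (-(Polynomial.eval z P).re) ≤ 1 := this
  rw [Real.exp_le_one_iff] at h2
  linarith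
end

section
/- Let P be a nonconstant polynomial with complex coefficients (0 < P.natDegree). Then for every z ∈ ℂ with Re(P(z)) = 0, the connected component of z inside the level set {w : ℂ | Re(P(w)) = 0} is unbounded (it does not satisfy Bornology.IsBounded). -/
set_option maxHeartbeats 1000000

open Metric Set

theorem connectedComponentIn_re_eq_zero_unbounded (P : Polynomial ℂ)
    (hP : 0 < P.natDegree) (z : ℂ) (hz : (Polynomial.eval z P).re = 0) :
    ¬ Bornology.IsBounded
      (connectedComponentIn {w : ℂ | (Polynomial.eval w P).re = 0} z) := by
  intro hb
  have hgc : Continuous fun w : ℂ => Polynomial.eval w P := P.continuous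
  set Z : Set ℂ := {w : ℂ | (Polynomial.eval w P).re = 0} with hZdef
  have hZc : IsClosed Z := isClosed_eq (Complex.continuous_re.comp hgc) continuous_const
  have hzZ : z ∈ Z := hz
  set C := connectedComponentIn Z z with hCdef
  have hCsub : C ⊆ Z := connectedComponentIn_subset _ _
  have hzC : z ∈ C := mem_connectedComponentIn hzZ
  have hCpre : IsPreconnected C := isPreconnected_connectedComponentIn
  have hCcl : IsClosed C := by
    refine isClosed_of_closure_subset ?_
    exact hCpre.closure.subset_connectedComponentIn (subset_closure hzC)
      (closure_minimal hCsub hZc)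
  -- a radius with `C ⊆ ball 0 R`
  obtain ⟨R₀, hR₀⟩ := hb.subset_closedBall 0
  set R : ℝ := R₀ + 1 with hRdef
  have hCball : C ⊆ ball (0 : ℂ) R := fun w hw =>
    mem_ball.mpr (lt_of_le_of_lt (mem_closedBall.mp (hR₀ hw)) (by simp [hRdef]))
  set K : Set ℂ := Z ∩ closedBall (0 : ℂ) R with hKdef
  have hKcpt : IsCompact K :=
    isCompact_of_isClosed_isBounded (hZc.inter Metric.isClosed_closedBall)
      (isBounded_closedBall.subset inter_subset_right)
  have hCK : C ⊆ K := fun w hw => ⟨hCsub hw, ball_subset_closedBall (hCball hw)⟩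
  have hzK : z ∈ K := hCK hzC
  haveI : CompactSpace K := isCompact_iff_compactSpace.mp hKcpt
  set x₀ : K := ⟨z, hzK⟩ with hx₀def
  -- identify the connected component of `x₀` in the subspace `K` with `C`
  have hcomp : (Subtype.val '' connectedComponent x₀ : Set ℂ) = C := by
    rw [← connectedComponentIn_eq_image hzK]
    apply Subset.antisymm
    · exact isPreconnected_connectedComponentIn.subset_connectedComponentIn
        (mem_connectedComponentIn hzK)
        ((connectedComponentIn_subset _ _).trans inter_subset_left)
    · exact hCpre.subset_connectedComponentIn hzC hCK
  -- the trace of the sphere on K is a closed set disjoint from the component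
  set F : Set K := Subtype.val ⁻¹' (sphere (0 : ℂ) R) with hFdef
  have hFcl : IsClosed F := isClosed_sphere.preimage continuous_subtype_val
  have hdisj : F ∩ ⋂ s : {s : Set K // IsClopen s ∧ x₀ ∈ s}, (s : Set K) = ∅ := by
    rw [← connectedComponent_eq_iInter_isClopen x₀]
    apply eq_empty_iff_forall_notMem.mpr
    rintro w ⟨hwF, hwc⟩
    have hwC : (w : ℂ) ∈ C := by
      rw [← hcomp]; exact ⟨w, hwc, rfl⟩
    have h1 : ‖(w : ℂ)‖ < R := mem_ball_zero_iff.mp (hCball hwC)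
    have h2 : ‖(w : ℂ)‖ = R := mem_sphere_zero_iff_norm.mp hwF
    linarith
  -- extract a single clopen neighbourhood avoiding the sphere
  have hfin : ∃ u : Finset {s : Set K // IsClopen s ∧ x₀ ∈ s},
      F ∩ ⋂ i ∈ u, (i : Set K) = ∅ := by
    by_contra hc
    push_neg at hc
    have hne := hFcl.isCompact.inter_iInter_nonempty
      (fun s : {s : Set K // IsClopen s ∧ x₀ ∈ s} => (s : Set K))
      (fun s => s.2.1.1)
      (fun u => by simpa using hc u)
    rw [hdisj] at hne
    exact hne.ne_empty rfl
  obtain ⟨u, hu⟩ := hfin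
  set V : Set K := ⋂ i ∈ u, (i : Set K) with hVdef
  have hVclopen : IsClopen V := isClopen_biInter_finset fun i _ => i.2.1
  have hx₀V : x₀ ∈ V := mem_iInter₂.mpr fun i _ => i.2.2
  have hVF : ∀ w ∈ V, w ∉ F := fun w hw hwF =>
    eq_empty_iff_forall_notMem.mp hu w ⟨hwF, hw⟩
  -- the compact piece A of Z
  set A : Set ℂ := Subtype.val '' V with hAdef
  have hAcpt : IsCompact A :=
    (hVclopen.isClosed.isCompact).image continuous_subtype_val
  have hzA : z ∈ A := ⟨x₀, hx₀V, rfl⟩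
  have hAball : A ⊆ ball (0 : ℂ) R := by
    rintro w ⟨v, hv, rfl⟩
    have h1 : ‖(v : ℂ)‖ ≤ R := mem_closedBall_zero_iff.mp v.2.2
    have h2 : ‖(v : ℂ)‖ ≠ R := fun h =>
      hVF v hv (by rwa [hFdef, mem_preimage, mem_sphere_zero_iff_norm])
    exact mem_ball_zero_iff.mpr (lt_of_le_of_ne h1 h2)
  obtain ⟨O, hOopen, hOV⟩ := isOpen_induced_iff.mp hVclopen.isOpen
  set Ao : Set ℂ := O ∩ ball (0 : ℂ) R with hAodef
  have hAoopen : IsOpen Ao := hOopen.inter isOpen_ball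
  have hAeq : A = Ao ∩ Z := by
    apply Subset.antisymm
    · rintro w ⟨v, hv, rfl⟩
      refine ⟨⟨?_, hAball ⟨v, hv, rfl⟩⟩, v.2.1⟩
      have : v ∈ (Subtype.val ⁻¹' O : Set K) := by rw [hOV]; exact hv
      exact this
    · rintro w ⟨⟨hwO, hwball⟩, hwZ⟩
      have hwK : w ∈ K := ⟨hwZ, ball_subset_closedBall hwball⟩
      refine ⟨⟨w, hwK⟩, ?_, rfl⟩
      rw [← hOV]; exact hwO
  set B : Set ℂ := Z \ Ao with hBdef
  have hBcl : IsClosed B := hZc.sdiff hAoopen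
  have hABdisj : Disjoint A B := by
    rw [hAeq]
    exact disjoint_left.mpr fun w hw hwB => hwB.2 hw.1
  obtain ⟨δ, hδ, hdisj2⟩ := hABdisj.exists_cthickenings hAcpt hBcl
  set U : Set ℂ := thickening δ A with hUdef
  have hUopen : IsOpen U := isOpen_thickening
  have hAU : A ⊆ U := self_subset_thickening hδ A
  have hclU : closure U ⊆ cthickening δ A := closure_thickening_subset_cthickening δ A
  have hZclU : Z ∩ closure U ⊆ A := by
    rintro w ⟨hwZ, hwc⟩
    by_contra hwA
    have hwB : w ∈ B := ⟨hwZ, fun hwAo => hwA (by rw [hAeq]; exact ⟨hwAo, hwZ⟩)⟩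
    exact (disjoint_left.mp hdisj2 (hclU hwc)) (self_subset_cthickening B hwB)
  have hUcpt : IsCompact (closure U) :=
    isCompact_of_isClosed_isBounded isClosed_closure
      (hAcpt.isBounded.cthickening.subset hclU)
  -- the open mapping theorem for the polynomial map
  have hopen : ∀ s : Set ℂ, IsOpen s →
      IsOpen ((fun w => Polynomial.eval w P) '' s) := by
    rcases (AnalyticOnNhd.eval_polynomial (𝕜 := ℂ) P).is_constant_or_isOpen
        isPreconnected_univ with h | h
    · exfalso
      obtain ⟨w, hw⟩ := h
      have hPC : P = Polynomial.C w :=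
        Polynomial.funext fun x => by
          rw [hw x (mem_univ x), Polynomial.eval_C]
      rw [hPC] at hP
      simp at hP
    · exact fun s hs => h s (subset_univ s) hs
  -- the set of heights reached inside closure U
  have hcont : Continuous fun t : ℝ => Complex.I * (t : ℂ) := by continuity
  set S : Set ℝ :=
    (fun t : ℝ => Complex.I * (t : ℂ)) ⁻¹' ((fun w => Polynomial.eval w P) '' closure U)
    with hSdef
  have hmem : ∀ t ∈ S, Complex.I * (t : ℂ) ∈ (fun w => Polynomial.eval w P) '' U := by
    rintro t ⟨w, hw, hwt⟩
    have hwZ : w ∈ Z := by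
      have h0 : Polynomial.eval w P = Complex.I * (t : ℂ) := hwt
      show (Polynomial.eval w P).re = 0
      rw [h0]
      simp
    exact ⟨w, hAU (hZclU ⟨hwZ, hw⟩), hwt⟩
  have hSopen : IsOpen S := by
    rw [isOpen_iff_mem_nhds]
    intro t ht
    have h1 : IsOpen ((fun w => Polynomial.eval w P) '' U) := hopen U hUopen
    have h2 := hcont.continuousAt (x := t) (h1.mem_nhds (hmem t ht))
    exact Filter.mem_of_superset h2
      (preimage_mono (image_mono subset_closure))
  have hScl : IsClosed S := ((hUcpt.image hgc).isClosed).preimage hcont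
  have hSne : S.Nonempty := by
    refine ⟨(Polynomial.eval z P).im, ⟨z, subset_closure (hAU hzA), ?_⟩⟩
    apply Complex.ext <;> simp [hz]
  have hSuniv : S = univ := IsClopen.eq_univ ⟨hScl, hSopen⟩ hSne
  -- contradiction with boundedness
  obtain ⟨M, hM⟩ := (hUcpt.image hgc).isBounded.subset_closedBall 0
  have hMS : (M + 1 : ℝ) ∈ S := by rw [hSuniv]; exact mem_univ _
  obtain ⟨w, hw, hwt⟩ := hMS
  have hwt' : Polynomial.eval w P = Complex.I * ((M + 1 : ℝ) : ℂ) := hwt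
  have h1 : ‖Complex.I * ((M + 1 : ℝ) : ℂ)‖ ≤ M := by
    rw [← hwt']
    exact mem_closedBall_zero_iff.mp (hM ⟨w, hw, rfl⟩)
  have h2 : ‖Complex.I * ((M + 1 : ℝ) : ℂ)‖ = |M + 1| := by
    rw [norm_mul, Complex.norm_I, one_mul, Complex.norm_real, Real.norm_eq_abs]
  rw [h2] at h1
  have := le_abs_self (M + 1)
  linarith
end
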